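/- Let N be a closed subspace of ℓ², c < 1 a constant, and {I_n} an increasing sequence of finite subsets of ℕ with union ℕ such that c(N, M_{I_n}) ≤ c for all n, where M_I = closed span of {e_k : k ∈ I}. Then the union of the subspaces N ∩ M_{I_n} is dense in N. -/

import Mathlib

open ContinuousLinearMap

/-- Cosine of the angle between two subspaces. -/
noncomputable def cosAngle {H : Type*} [NormedAddCommGroup H] [InnerProductSpace ℂ H]
    (M N : Submodule ℂ H) : ℝ :=
  sSup {r : ℝ | ∃ x ∈ M ⊓ (M ⊓ N)ᗮ, ∃ y ∈ N ⊓ (M ⊓ N)ᗮ,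
    ‖x‖ = 1 ∧ ‖y‖ = 1 ∧ r = ‖(inner ℂ x y : ℂ)‖}

/-- `M_I`, the closed subspace of `ℓ²` spanned by the canonical basis vectors `{e_k : k ∈ I}`. -/
noncomputable def MI (I : Set ℕ) : Submodule ℂ (lp (fun _ : ℕ => ℂ) 2) :=
  (Submodule.span ℂ ((fun n => lp.single 2 n (1 : ℂ)) '' I)).topologicalClosure

set_option maxHeartbeats 1000000

/-- If `{I_n}` is an increasing sequence of finite subsets of `ℕ` with union `ℕ` and
`c(N, M_{I_n}) ≤ c < 1` for all `n`, then `⋃_n (N ∩ M_{I_n})` is dense in `N`. -/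
theorem stmt16 (N : Submodule ℂ (lp (fun _ : ℕ => ℂ) 2))
    (hN : IsClosed (N : Set (lp (fun _ : ℕ => ℂ) 2)))
    (c : ℝ) (hc : c < 1) (I : ℕ → Finset ℕ)
    (hmono : ∀ n, I n ⊆ I (n + 1)) (hunion : ∀ k : ℕ, ∃ n, k ∈ I n)
    (hang : ∀ n, cosAngle N (MI (I n : Set ℕ)) ≤ c) :
    closure (⋃ n, ((N ⊓ MI (I n : Set ℕ) : Submodule ℂ (lp (fun _ : ℕ => ℂ) 2)) :
      Set (lp (fun _ : ℕ => ℂ) 2))) = (N : Set (lp (fun _ : ℕ => ℂ) 2)) := by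
  set H := lp (fun _ : ℕ => ℂ) 2 with hHdef
  set c' : ℝ := max c 0 with hc'def
  have hc'1 : c' < 1 := max_lt hc one_pos
  have hc'0 : (0:ℝ) ≤ c' := le_max_right _ _
  have hs2 : (0:ℝ) < 1 - c' ^ 2 := by nlinarith
  set s : ℝ := Real.sqrt (1 - c' ^ 2) with hsdef
  have hs0 : 0 < s := Real.sqrt_pos.mpr hs2
  have hssq : s ^ 2 = 1 - c' ^ 2 := Real.sq_sqrt hs2.le
  have hImono : Monotone I := monotone_nat_of_le_succ fun n => Finset.le_iff_subset.mpr (hmono n)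
  apply subset_antisymm
  · exact closure_minimal (Set.iUnion_subset fun n x hx => hx.1) hN
  · intro x hx
    rw [Metric.mem_closure_iff]
    intro ε hε
    set δ : ℝ := ε * s / 2 with hδdef
    have hδ0 : 0 < δ := by positivity
    -- find a finite truncation of x within δ
    have hsum : HasSum (fun i : ℕ => lp.single 2 i (x i)) x :=
      lp.hasSum_single (by norm_num) x
    have htend := hsum.tendsto_sum_nat
    rw [Metric.tendsto_atTop] at htend
    obtain ⟨m, hm⟩ := htend δ hδ0
    have hmdist : ‖x - ∑ i ∈ Finset.range m, lp.single 2 i (x i)‖ < δ := by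
      have := hm m le_rfl
      rwa [dist_eq_norm, ← norm_neg, neg_sub] at this
    -- find n containing range m
    obtain ⟨n, hn⟩ : ∃ n, ∀ k ∈ Finset.range m, k ∈ I n :=
      ⟨(Finset.range m).sup fun k => Nat.find (hunion k), fun k hk =>
        Finset.le_iff_subset.mp (hImono (Finset.le_sup hk)) (Nat.find_spec (hunion k))⟩
    set M : Submodule ℂ H := MI (I n : Set ℕ) with hMdef
    set K : Submodule ℂ H := N ⊓ M with hKdef
    have hMclosed : IsClosed (M : Set H) := Submodule.isClosed_topologicalClosure _
    have hKclosed : IsClosed (K : Set H) := by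
      rw [hKdef, Submodule.coe_inf]; exact hN.inter hMclosed
    haveI : CompleteSpace M := hMclosed.completeSpace_coe
    haveI : CompleteSpace K := hKclosed.completeSpace_coe
    -- the truncation lies in M
    have hyM : (∑ i ∈ Finset.range m, lp.single 2 i (x i)) ∈ M := by
      refine Submodule.sum_mem _ fun i hi => ?_
      refine Submodule.le_topologicalClosure _ ?_
      have h1 : lp.single 2 i (1 : ℂ) ∈
          ((fun j => lp.single 2 j (1 : ℂ)) '' (I n : Set ℕ)) :=
        ⟨i, hn i hi, rfl⟩
      have h2 : ((x i : ℂ) • lp.single 2 i (1 : ℂ) : H) = lp.single 2 i (x i) := by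
        rw [← lp.single_smul]
        congr 1
        simp
      rw [← h2]
      exact Submodule.smul_mem _ _ (Submodule.subset_span h1)
    set P := Submodule.orthogonalProjectionOnto M with hPdef
    set Q := Submodule.orthogonalProjectionOnto K with hQdef
    set u : H := x - ↑(Q x) with hudef
    have huN : u ∈ N := N.sub_mem hx ((Q x).2 : (Q x : H) ∈ K).1
    have huperp : u ∈ Kᗮ := Submodule.sub_starProjection_mem_orthogonal x
    -- key angle estimate : ‖P u‖ ≤ c' * ‖u‖
    have hPu : ‖(P u : H)‖ ≤ c' * ‖u‖ := by
      by_cases hu0 : u = 0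
      · rw [hu0]
        simp
      by_cases hP0 : (P u : H) = 0
      · rw [hP0]
        simp
        positivity
      have hun : (0:ℝ) < ‖u‖ := (norm_pos_iff (a := u)).mpr hu0
      have hPn : (0:ℝ) < ‖(P u : H)‖ := (norm_pos_iff (a := (P u : H))).mpr hP0
      set a : H := (‖u‖ : ℂ)⁻¹ • u with hadef
      set b : H := (‖(P u : H)‖ : ℂ)⁻¹ • (P u : H) with hbdef
      have hPuK : (P u : H) ∈ Kᗮ := by
        rw [Submodule.mem_orthogonal]
        intro w hw
        have hw2 : (Submodule.orthogonalProjectionOnto M w : H) = w :=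
          Submodule.starProjection_eq_self_iff.mpr hw.2
        calc (inner ℂ w ((P u : H)) : ℂ)
            = inner ℂ ((Submodule.orthogonalProjectionOnto M w : H)) u := by
              exact (Submodule.inner_starProjection_left_eq_right M w u).symm
          _ = inner ℂ w u := by rw [hw2]
          _ = 0 := (Submodule.mem_orthogonal _ _).mp huperp w hw
      have haS : a ∈ N ⊓ (N ⊓ M)ᗮ :=
        Submodule.smul_mem _ _ (Submodule.mem_inf.mpr ⟨huN, huperp⟩)
      have hbS : b ∈ M ⊓ (N ⊓ M)ᗮ :=
        Submodule.smul_mem _ _ (Submodule.mem_inf.mpr ⟨(P u).2, hPuK⟩)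
      have hna : ‖a‖ = 1 := by
        rw [hadef, norm_smul, norm_inv, Complex.norm_real, Real.norm_eq_abs,
          abs_of_pos hun, inv_mul_cancel₀ hun.ne']
      have hnb : ‖b‖ = 1 := by
        rw [hbdef, norm_smul, norm_inv, Complex.norm_real, Real.norm_eq_abs,
          abs_of_pos hPn, inv_mul_cancel₀ hPn.ne']
      have hinner : (inner ℂ u ((P u : H)) : ℂ) = (‖(P u : H)‖ : ℂ) ^ 2 := by
        have h0 : (inner ℂ (u - (P u : H)) ((P u : H)) : ℂ) =
            0 := Submodule.starProjection_inner_eq_zero u _ (P u).2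
        rw [inner_sub_left, sub_eq_zero] at h0
        rw [h0, inner_self_eq_norm_sq_to_K]
        norm_cast
      have hval : ‖(inner ℂ a b : ℂ)‖ = ‖(P u : H)‖ / ‖u‖ := by
        rw [hadef, hbdef, inner_smul_left, inner_smul_right, hinner]
        simp only [map_inv₀, Complex.conj_ofReal, norm_mul, norm_inv, norm_pow,
          Complex.norm_real, Real.norm_eq_abs, abs_of_pos hun, abs_of_pos hPn]
        field_simp
      have hmem : ‖(inner ℂ a b : ℂ)‖ ∈ {r : ℝ | ∃ x ∈ N ⊓ (N ⊓ M)ᗮ, ∃ y ∈ M ⊓ (N ⊓ M)ᗮ,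
          ‖x‖ = 1 ∧ ‖y‖ = 1 ∧ r = ‖(inner ℂ x y : ℂ)‖} :=
        ⟨a, haS, b, hbS, hna, hnb, rfl⟩
      have hbdd : BddAbove {r : ℝ | ∃ x ∈ N ⊓ (N ⊓ M)ᗮ, ∃ y ∈ M ⊓ (N ⊓ M)ᗮ,
          ‖x‖ = 1 ∧ ‖y‖ = 1 ∧ r = ‖(inner ℂ x y : ℂ)‖} := by
        refine ⟨1, ?_⟩
        rintro r ⟨v, -, w, -, hv, hw, rfl⟩
        calc ‖(inner ℂ v w : ℂ)‖ ≤ ‖v‖ * ‖w‖ := norm_inner_le_norm v w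
          _ = 1 := by rw [hv, hw, one_mul]
      have hle : ‖(inner ℂ a b : ℂ)‖ ≤ c' :=
        (le_csSup hbdd hmem).trans ((hang n).trans (le_max_left c 0))
      rw [hval, div_le_iff₀ hun] at hle
      linarith [hle]
    -- Pythagoras and minimality
    have hQM : (↑(Q x) : H) ∈ M := ((Q x).2 : (Q x : H) ∈ K).2
    have h3 : u - ↑(P u) = x - ↑(P x) := by
      have hfix : (P ((Q x : H)) : H) = ↑(Q x) := Submodule.starProjection_eq_self_iff.mpr hQM
      have hPu' : (P u : H) = ↑(P x) - ↑(Q x) := by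
        rw [hudef, map_sub, Submodule.coe_sub, hfix]
      rw [hudef, hPu']; abel
    have hpyth : ‖x - ↑(P x)‖ ^ 2 = ‖u‖ ^ 2 - ‖(P u : H)‖ ^ 2 := by
      have h1 := Submodule.norm_sq_eq_add_norm_sq_projection u M
      have h2 : (Submodule.orthogonalProjectionOnto Mᗮ u : H) = u - ↑(P u) :=
        Submodule.starProjection_orthogonal_val u
      rw [← h3]
      have h1' : ‖u‖ ^ 2 = ‖(P u : H)‖ ^ 2 + ‖(Submodule.orthogonalProjectionOnto Mᗮ u : H)‖ ^ 2 := by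
        exact h1
      rw [h2] at h1'
      linarith
    have hdistP : ‖x - ↑(P x)‖ < δ := by
      have hmin := Submodule.starProjection_minimal (U := M) x
      have hle2 : (⨅ v : M, ‖x - v‖) ≤ ‖x - ∑ i ∈ Finset.range m, lp.single 2 i (x i)‖ :=
        ciInf_le ⟨0, by rintro r ⟨v, rfl⟩; exact norm_nonneg _⟩ (⟨_, hyM⟩ : M)
      calc ‖x - ↑(P x)‖ = ⨅ v : M, ‖x - v‖ := hmin
        _ ≤ _ := hle2
        _ < δ := hmdist
    -- conclude
    have hB2 : ‖(P u : H)‖ ^ 2 ≤ (c' * ‖u‖) ^ 2 :=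
      pow_le_pow_left₀ (norm_nonneg _) hPu 2
    have hu2 : (1 - c' ^ 2) * ‖u‖ ^ 2 ≤ ‖x - ↑(P x)‖ ^ 2 := by
      rw [mul_pow] at hB2
      linarith [hpyth]
    have hd2 : ‖x - ↑(P x)‖ ^ 2 < δ ^ 2 :=
      pow_lt_pow_left₀ hdistP (norm_nonneg _) two_ne_zero
    have huu : ‖u‖ ^ 2 < (ε / 2) ^ 2 := by
      have hδ2 : δ ^ 2 = (ε / 2) ^ 2 * (1 - c' ^ 2) := by
        rw [hδdef, ← hssq]; ring
      have h4 : (1 - c' ^ 2) * ‖u‖ ^ 2 < (1 - c' ^ 2) * (ε / 2) ^ 2 := by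
        calc (1 - c' ^ 2) * ‖u‖ ^ 2 ≤ _ := hu2
          _ < δ ^ 2 := hd2
          _ = (1 - c' ^ 2) * (ε / 2) ^ 2 := by rw [hδ2]; ring
      exact lt_of_mul_lt_mul_left h4 hs2.le
    have huε : ‖u‖ < ε := by
      have := lt_of_pow_lt_pow_left₀ 2 (by positivity : (0:ℝ) ≤ ε / 2) huu
      linarith
    refine ⟨↑(Q x), Set.mem_iUnion.mpr ⟨n, (Q x).2⟩, ?_⟩
    rw [dist_eq_norm, ← hudef]
    exact huε
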